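/- Let k be even and let G, G̃ be connected k-uniform hypergraphs with G = G_0(v_2) ⋄ H(u) and G̃ = G_0(v_1) ⋄ H(u), where v_1 ≠ v_2 are vertices of G_0 and u is a vertex of H (i.e., G̃ is obtained from G by relocating the branch H from v_2 to v_1). If G has a first eigenvector x with |x_{v_1}| ≥ |x_{v_2}|, then λ_min(G̃) ≤ λ_min(G). Moreover if additionally x_{v_2} ≠ 0, the inequality is strict. -/

import Mathlib

open Finset BigOperators

variable {V : Type*}

/-- A `k`-uniform hypergraph given by its edge set: every edge has exactly `k` vertices. -/
def Uniform [DecidableEq V] (E : Finset (Finset V)) (k : ℕ) : Prop :=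
  ∀ e ∈ E, e.card = k

/-- Two vertices are adjacent if some edge contains both. -/
def HAdj [DecidableEq V] (E : Finset (Finset V)) (a b : V) : Prop :=
  a ≠ b ∧ ∃ e ∈ E, a ∈ e ∧ b ∈ e

/-- The hypergraph is connected: every two vertices are joined by a walk. -/
def HConnected [DecidableEq V] (E : Finset (Finset V)) : Prop :=
  ∀ a b : V, Relation.ReflTransGen (HAdj E) a b

/-- `(lam, x)` satisfies the H-eigen equations of the adjacency tensor:
for each vertex `v`, `∑_{e ∋ v} ∏_{w ∈ e \ {v}} x w = lam * (x v)^(k-1)`. -/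
def isEig [Fintype V] [DecidableEq V] (E : Finset (Finset V)) (k : ℕ) (lam : ℝ) (x : V → ℝ) :
    Prop :=
  ∀ v : V, (∑ e ∈ E.filter (fun e => v ∈ e), ∏ w ∈ e.erase v, x w) = lam * x v ^ (k - 1)

/-- The set of H-eigenvalues of the adjacency tensor of the hypergraph. -/
def specH [Fintype V] [DecidableEq V] (E : Finset (Finset V)) (k : ℕ) : Set ℝ :=
  {lam | ∃ x : V → ℝ, x ≠ 0 ∧ isEig E k lam x}

/-- The least H-eigenvalue of the adjacency tensor. -/
noncomputable def lamMin [Fintype V] [DecidableEq V] (E : Finset (Finset V)) (k : ℕ) : ℝ :=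
  sInf (specH E k)

/-- A first eigenvector: a real eigenvector associated with the least H-eigenvalue. -/
def IsFirstEigvec [Fintype V] [DecidableEq V] (E : Finset (Finset V)) (k : ℕ) (x : V → ℝ) :
    Prop :=
  x ≠ 0 ∧ isEig E k (lamMin E k) x

set_option linter.unusedSectionVars false
set_option linter.unusedVariables false
set_option maxHeartbeats 1000000

section Helpers

noncomputable def Qf [DecidableEq V] (E : Finset (Finset V)) (x : V → ℝ) : ℝ :=
  ∑ e ∈ E, ∏ w ∈ e, x w

noncomputable def Gf [Fintype V] (k : ℕ) (x : V → ℝ) : ℝ := ∑ v, x v ^ k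

noncomputable def Af [DecidableEq V] (E : Finset (Finset V)) (v : V) (x : V → ℝ) : ℝ :=
  ∑ e ∈ E.filter (fun e => v ∈ e), ∏ w ∈ e.erase v, x w

variable [Fintype V] [DecidableEq V]

lemma Gf_pos {k : ℕ} (hk : Even k) {x : V → ℝ} (hx : x ≠ 0) : 0 < Gf k x := by
  obtain ⟨v, hv⟩ := Function.ne_iff.mp hx
  exact Finset.sum_pos' (fun w _ => hk.pow_nonneg _) ⟨v, Finset.mem_univ v, hk.pow_pos hv⟩

lemma Qf_zero {E : Finset (Finset V)} {k : ℕ} (hU : Uniform E k) (hk0 : 0 < k) :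
    Qf E (0 : V → ℝ) = 0 := by
  refine Finset.sum_eq_zero fun e he => ?_
  obtain ⟨w, hw⟩ := Finset.card_pos.mp (by rw [hU e he]; exact hk0)
  exact Finset.prod_eq_zero hw rfl

lemma eig_qform {E : Finset (Finset V)} {k : ℕ} {lam : ℝ} {x : V → ℝ}
    (hU : Uniform E k) (hk0 : 0 < k) (h : isEig E k lam x) :
    (k : ℝ) * Qf E x = lam * Gf k x := by
  have key : ∑ v, x v * Af E v x = lam * Gf k x := by
    have hv : ∀ v, x v * Af E v x = lam * x v ^ k := by
      intro v
      rw [Af, h v, ← mul_assoc, mul_comm (x v) lam, mul_assoc, ← pow_succ']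
      congr 2
      omega
    simp_rw [hv, Gf, Finset.mul_sum]
  rw [← key]
  unfold Af
  simp_rw [Finset.mul_sum, Finset.sum_filter]
  rw [Finset.sum_comm]
  rw [Qf, Finset.mul_sum]
  refine Finset.sum_congr rfl fun e he => ?_
  have h1 : (∑ v, if v ∈ e then x v * ∏ w ∈ e.erase v, x w else 0)
      = ∑ v ∈ e, x v * ∏ w ∈ e.erase v, x w := by
    rw [Finset.sum_ite_mem, Finset.univ_inter]
  have h2 : ∀ v ∈ e, x v * ∏ w ∈ e.erase v, x w = ∏ w ∈ e, x w := fun v hv =>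
    Finset.mul_prod_erase e x hv
  rw [h1, Finset.sum_congr rfl h2, Finset.sum_const, hU e he, nsmul_eq_mul]

lemma Qf_update (E : Finset (Finset V)) (x : V → ℝ) (v : V) (t : ℝ) :
    Qf E (Function.update x v (x v + t)) = Qf E x + t * Af E v x := by
  unfold Qf Af
  rw [← Finset.sum_filter_add_sum_filter_not E (fun e => v ∈ e)
    (f := fun e => ∏ w ∈ e, Function.update x v (x v + t) w),
    ← Finset.sum_filter_add_sum_filter_not E (fun e => v ∈ e) (f := fun e => ∏ w ∈ e, x w)]
  have h1 : ∀ e ∈ E.filter (fun e => v ∈ e), ∏ w ∈ e, Function.update x v (x v + t) w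
      = ∏ w ∈ e, x w + t * ∏ w ∈ e.erase v, x w := by
    intro e he
    have hv : v ∈ e := (Finset.mem_filter.mp he).2
    have herase : ∀ w ∈ e.erase v, Function.update x v (x v + t) w = x w := fun w hw =>
      Function.update_of_ne (Finset.ne_of_mem_erase hw) _ _
    rw [← Finset.mul_prod_erase e _ hv, Function.update_self, Finset.prod_congr rfl herase,
      add_mul, Finset.mul_prod_erase e x hv]
  have h2 : ∀ e ∈ E.filter (fun e => ¬ v ∈ e), ∏ w ∈ e, Function.update x v (x v + t) w
      = ∏ w ∈ e, x w := by
    intro e he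
    refine Finset.prod_congr rfl fun w hw => Function.update_of_ne ?_ _ _
    rintro rfl
    exact (Finset.mem_filter.mp he).2 hw
  rw [Finset.sum_congr rfl h1, Finset.sum_congr rfl h2, Finset.sum_add_distrib, Finset.mul_sum]
  ring

lemma Gf_update (k : ℕ) (x : V → ℝ) (v : V) (t : ℝ) :
    Gf k (Function.update x v (x v + t)) = Gf k x - x v ^ k + (x v + t) ^ k := by
  unfold Gf
  have h : ∀ w, (Function.update x v (x v + t) w) ^ k
      = Function.update (fun w => x w ^ k) v ((x v + t) ^ k) w := fun w =>
    Function.apply_update (fun _ y => y ^ k) x v (x v + t) w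
  simp_rw [h]
  rw [Finset.sum_update_of_mem (Finset.mem_univ v)]
  have h2 : ∑ w ∈ Finset.univ \ {v}, x w ^ k = (∑ w, x w ^ k) - x v ^ k := by
    rw [Finset.sdiff_singleton_eq_erase, Finset.sum_erase_eq_sub (Finset.mem_univ v)]
  rw [h2]; ring

lemma key_deriv (E : Finset (Finset V)) (k : ℕ) (hk0 : 0 < k) (lam : ℝ) (x : V → ℝ) (v : V)
    (h0 : (k : ℝ) * Qf E x = lam * Gf k x)
    (hge : ∀ u : V → ℝ, lam * Gf k u ≤ (k : ℝ) * Qf E u) :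
    Af E v x = lam * x v ^ (k - 1) := by
  set f : ℝ → ℝ := fun t =>
    ((k : ℝ) * (Qf E x + t * Af E v x)) - lam * (Gf k x - x v ^ k + (x v + t) ^ k) with hf
  have hfval : ∀ t, f t = (k : ℝ) * Qf E (Function.update x v (x v + t))
      - lam * Gf k (Function.update x v (x v + t)) := by
    intro t; rw [Qf_update, Gf_update]
  have hf0 : f 0 = 0 := by
    rw [hfval]
    simp only [add_zero, Function.update_eq_self]
    rw [h0]; ring
  have hfge : ∀ t, f 0 ≤ f t := by
    intro t; rw [hf0, hfval]; linarith [hge (Function.update x v (x v + t))]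
  have hloc : IsLocalMin f 0 := Filter.Eventually.of_forall hfge
  have hd : HasDerivAt f ((k : ℝ) * Af E v x - lam * ((k : ℝ) * x v ^ (k - 1))) 0 := by
    have h1 : HasDerivAt (fun t : ℝ => (x v + t) ^ k) ((k : ℝ) * (x v + 0) ^ (k - 1) * 1) 0 :=
      ((hasDerivAt_id 0).const_add (x v)).pow k
    have h2 : HasDerivAt (fun t : ℝ => (k : ℝ) * (Qf E x + t * Af E v x))
        ((k : ℝ) * Af E v x) 0 := by
      have h2' : HasDerivAt (fun t : ℝ => Qf E x + t * Af E v x) (Af E v x) 0 := by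
        simpa using ((hasDerivAt_id 0).mul_const (Af E v x)).const_add (Qf E x)
      simpa using h2'.const_mul (k : ℝ)
    have h3 : HasDerivAt (fun t : ℝ => lam * (Gf k x - x v ^ k + (x v + t) ^ k))
        (lam * ((k : ℝ) * x v ^ (k - 1))) 0 := by
      have h3' := (h1.const_add (Gf k x - x v ^ k)).const_mul lam
      simpa using h3'
    exact h2.sub h3
  have hzero := hloc.hasDerivAt_eq_zero hd
  have hkne : (k : ℝ) ≠ 0 := Nat.cast_ne_zero.mpr hk0.ne'
  have hfin : (k : ℝ) * Af E v x = (k : ℝ) * (lam * x v ^ (k - 1)) := by linarith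
  exact mul_left_cancel₀ hkne hfin

lemma exists_sphere_min (E : Finset (Finset V)) (k : ℕ) (hk0 : 0 < k) (hk : Even k)
    [Nonempty V] :
    ∃ x₀ : V → ℝ, Gf k x₀ = 1 ∧ ∀ u : V → ℝ, Gf k u = 1 → Qf E x₀ ≤ Qf E u := by
  have hQc : Continuous (fun u : V → ℝ => Qf E u) := by
    unfold Qf
    exact continuous_finset_sum _ fun e _ =>
      continuous_finset_prod _ fun w _ => continuous_apply w
  have hGc : Continuous (fun u : V → ℝ => Gf k u) :=
    continuous_finset_sum _ fun v _ => (continuous_apply v).pow k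
  set S : Set (V → ℝ) := {u | Gf k u = 1} with hS
  have hSne : S.Nonempty := by
    refine ⟨fun v => if v = Classical.arbitrary V then 1 else 0, ?_⟩
    simp only [hS, Set.mem_setOf_eq, Gf, apply_ite (· ^ k), one_pow, zero_pow hk0.ne']
    simp
  have hclosed : IsClosed S := by
    have h' : S = (fun u : V → ℝ => Gf k u) ⁻¹' {1} := by ext u; simp [hS]
    rw [h']
    exact (isClosed_singleton (x := (1:ℝ))).preimage hGc
  have hbdd : Bornology.IsBounded S := by
    refine (Metric.isBounded_closedBall (x := (0 : V → ℝ)) (r := 1)).subset ?_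
    intro u hu
    rw [Metric.mem_closedBall, dist_zero_right]
    rw [pi_norm_le_iff_of_nonneg zero_le_one]
    intro v
    have h1 : u v ^ k ≤ 1 := by
      have h1' := Finset.single_le_sum (f := fun w => u w ^ k)
        (fun w _ => hk.pow_nonneg (u w)) (Finset.mem_univ v)
      calc u v ^ k ≤ Gf k u := h1'
        _ = 1 := hu
    have h2 : |u v| ^ k ≤ 1 := by
      rw [← abs_pow, abs_of_nonneg (hk.pow_nonneg _)]; exact h1
    exact (pow_le_one_iff_of_nonneg (abs_nonneg _) hk0.ne').mp h2
  have hcomp : IsCompact S := Metric.isCompact_of_isClosed_isBounded hclosed hbdd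
  obtain ⟨x₀, hx₀S, hmin⟩ := hcomp.exists_isMinOn hSne hQc.continuousOn
  exact ⟨x₀, hx₀S, fun u hu => hmin hu⟩

lemma sphere_min_global {E : Finset (Finset V)} {k : ℕ} (hU : Uniform E k) (hk0 : 0 < k)
    (hk : Even k) {x₀ : V → ℝ} (h1 : Gf k x₀ = 1)
    (hmin : ∀ u : V → ℝ, Gf k u = 1 → Qf E x₀ ≤ Qf E u) :
    ∀ u : V → ℝ, Qf E x₀ * Gf k u ≤ Qf E u := by
  intro u
  rcases eq_or_ne u 0 with rfl | hu
  · have hz : Gf k (0 : V → ℝ) = 0 := by simp [Gf, zero_pow hk0.ne']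
    rw [hz, Qf_zero hU hk0, mul_zero]
  · have hc : 0 < Gf k u := Gf_pos hk hu
    set c := Gf k u with hcdef
    set r : ℝ := c ^ ((k : ℝ)⁻¹) with hrdef
    have hr : 0 < r := Real.rpow_pos_of_pos hc _
    have hrk : r ^ k = c := Real.rpow_inv_natCast_pow hc.le hk0.ne'
    set w : V → ℝ := fun i => r⁻¹ * u i with hwdef
    have hGw : Gf k w = 1 := by
      unfold Gf
      simp_rw [hwdef, mul_pow, ← Finset.mul_sum]
      rw [inv_pow, hrk]
      field_simp [← hcdef]
      rw [hcdef, Gf]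
    have hQw : Qf E w = (r ^ k)⁻¹ * Qf E u := by
      unfold Qf
      rw [Finset.mul_sum]
      refine Finset.sum_congr rfl fun e he => ?_
      simp_rw [hwdef]
      rw [Finset.prod_mul_distrib, Finset.prod_const, hU e he, inv_pow]
    have hml := hmin w hGw
    rw [hQw, hrk] at hml
    calc Qf E x₀ * c ≤ (c⁻¹ * Qf E u) * c := mul_le_mul_of_nonneg_right hml hc.le
      _ = Qf E u := by field_simp

lemma lamMin_eq {E : Finset (Finset V)} {k : ℕ} (hU : Uniform E k) (hk0 : 0 < k)
    (hk : Even k) [Nonempty V] :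
    ∀ u : V → ℝ, lamMin E k * Gf k u ≤ (k : ℝ) * Qf E u := by
  obtain ⟨x₀, hG1, hmin⟩ := exists_sphere_min E k hk0 hk
  have hglob := sphere_min_global hU hk0 hk hG1 hmin
  have hx₀ne : x₀ ≠ 0 := by
    rintro rfl
    rw [show Gf k (0 : V → ℝ) = 0 by simp [Gf, zero_pow hk0.ne']] at hG1
    norm_num at hG1
  have heig : isEig E k ((k : ℝ) * Qf E x₀) x₀ := by
    intro v
    have h0 : (k : ℝ) * Qf E x₀ = ((k : ℝ) * Qf E x₀) * Gf k x₀ := by rw [hG1, mul_one]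
    have hge : ∀ u : V → ℝ, ((k : ℝ) * Qf E x₀) * Gf k u ≤ (k : ℝ) * Qf E u := by
      intro u
      calc (k : ℝ) * Qf E x₀ * Gf k u = (k:ℝ) * (Qf E x₀ * Gf k u) := by ring
        _ ≤ (k : ℝ) * Qf E u := mul_le_mul_of_nonneg_left (hglob u) (Nat.cast_nonneg k)
    exact key_deriv E k hk0 _ x₀ v h0 hge
  have hmem : (k : ℝ) * Qf E x₀ ∈ specH E k := ⟨x₀, hx₀ne, heig⟩
  have hlb : ∀ lam ∈ specH E k, (k : ℝ) * Qf E x₀ ≤ lam := by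
    rintro lam ⟨u, hu0, hue⟩
    have hq := eig_qform hU hk0 hue
    have hgu : 0 < Gf k u := Gf_pos hk hu0
    have h1 : (k : ℝ) * Qf E x₀ * Gf k u ≤ lam * Gf k u := by
      calc (k : ℝ) * Qf E x₀ * Gf k u = (k:ℝ) * (Qf E x₀ * Gf k u) := by ring
        _ ≤ (k : ℝ) * Qf E u := mul_le_mul_of_nonneg_left (hglob u) (Nat.cast_nonneg k)
        _ = lam * Gf k u := hq
    exact le_of_mul_le_mul_right h1 hgu
  have hlam : lamMin E k = (k : ℝ) * Qf E x₀ :=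
    le_antisymm (csInf_le ⟨_, hlb⟩ hmem) (le_csInf ⟨_, hmem⟩ hlb)
  intro u
  rw [hlam]
  calc (k : ℝ) * Qf E x₀ * Gf k u = (k:ℝ) * (Qf E x₀ * Gf k u) := by ring
    _ ≤ (k : ℝ) * Qf E u := mul_le_mul_of_nonneg_left (hglob u) (Nat.cast_nonneg k)

end Helpers

/-- Relocating a branch `H` from `v₂` to `v₁`: if `x` is a first eigenvector of
`G = G₀(v₂) ⋄ H(u)` with `|x v₁| ≥ |x v₂|`, then `λ_min(G̃) ≤ λ_min(G)` for
`G̃ = G₀(v₁) ⋄ H(u)`, with strict inequality when `x v₂ ≠ 0`. -/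
theorem stmt12 [Fintype V] [DecidableEq V]
    (V0 : Finset V) (v1 v2 : V) (E0 EH : Finset (Finset V)) (k : ℕ)
    (hk : Even k) (hk0 : 0 < k)
    (hv1 : v1 ∈ V0) (hv2 : v2 ∈ V0) (hne : v1 ≠ v2)
    (hE0 : ∀ e ∈ E0, e ⊆ V0) (hEH : ∀ e ∈ EH, e ∩ V0 ⊆ {v2})
    (hU : Uniform (E0 ∪ EH) k)
    (hconn : HConnected (E0 ∪ EH))
    (hconnT : HConnected (E0 ∪ EH.image (fun e => if v2 ∈ e then insert v1 (e.erase v2) else e)))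
    (hE0ne : E0.Nonempty) (hEHne : EH.Nonempty) (hroot : ∃ e ∈ EH, v2 ∈ e)
    (x : V → ℝ) (hx : IsFirstEigvec (E0 ∪ EH) k x) (hge : |x v2| ≤ |x v1|) :
    lamMin (E0 ∪ EH.image (fun e => if v2 ∈ e then insert v1 (e.erase v2) else e)) k
      ≤ lamMin (E0 ∪ EH) k ∧
    (x v2 ≠ 0 →
      lamMin (E0 ∪ EH.image (fun e => if v2 ∈ e then insert v1 (e.erase v2) else e)) k
        < lamMin (E0 ∪ EH) k) := by
  classical
  have hNe : Nonempty V := ⟨v1⟩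
  set rel : Finset V → Finset V := fun e => if v2 ∈ e then insert v1 (e.erase v2) else e
    with hrel
  set E' : Finset (Finset V) := E0 ∪ EH.image rel with hE'
  have hk2 : 2 ≤ k := by
    rcases hk with ⟨m, hm⟩
    omega
  have hkm1 : Odd (k - 1) := Nat.Even.sub_odd hk0 hk odd_one
  have hE0k : ∀ e ∈ E0, e.card = k := fun e he => hU e (Finset.mem_union_left _ he)
  have hEHk : ∀ e ∈ EH, e.card = k := fun e he => hU e (Finset.mem_union_right _ he)
  have hEHV0 : ∀ e ∈ EH, ∀ w ∈ e, w ∈ V0 → w = v2 := by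
    intro e he w hw hwV0
    have := hEH e he (Finset.mem_inter.mpr ⟨hw, hwV0⟩)
    simpa using this
  have hv1nEH : ∀ e ∈ EH, v1 ∉ e := fun e he h => hne (hEHV0 e he v1 h hv1)
  have hd : Disjoint E0 EH := by
    rw [Finset.disjoint_left]
    intro e he0 heH
    have h1 : e ⊆ {v2} := fun w hw => Finset.mem_singleton.mpr (hEHV0 e heH w hw (hE0 e he0 hw))
    have h2 := Finset.card_le_card h1
    rw [Finset.card_singleton, hE0k e he0] at h2
    omega
  have hrelv2 : ∀ e, v2 ∈ e → rel e = insert v1 (e.erase v2) := by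
    intro e h; rw [hrel]; simp [h]
  have hrelnv2 : ∀ e, v2 ∉ e → rel e = e := by
    intro e h; rw [hrel]; simp [h]
  have hrelcard : ∀ e ∈ EH, (rel e).card = k := by
    intro e he
    by_cases hv2e : v2 ∈ e
    · rw [hrelv2 e hv2e, Finset.card_insert_of_notMem
        (fun h => hv1nEH e he (Finset.mem_of_mem_erase h)), Finset.card_erase_of_mem hv2e,
        hEHk e he]
      omega
    · rw [hrelnv2 e hv2e]; exact hEHk e he
  have hU' : Uniform E' k := by
    intro f hf
    rcases Finset.mem_union.mp hf with h | h
    · exact hE0k f h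
    · obtain ⟨e, he, rfl⟩ := Finset.mem_image.mp h
      exact hrelcard e he
  have hv2rel : ∀ e ∈ EH, v2 ∉ rel e := by
    intro e he h
    by_cases hv2e : v2 ∈ e
    · rw [hrelv2 e hv2e] at h
      rcases Finset.mem_insert.mp h with h' | h'
      · exact hne h'.symm
      · exact Finset.notMem_erase v2 e h'
    · rw [hrelnv2 e hv2e] at h; exact hv2e h
  have hd' : Disjoint E0 (EH.image rel) := by
    rw [Finset.disjoint_left]
    intro f hf0 hfim
    obtain ⟨e, he, rfl⟩ := Finset.mem_image.mp hfim
    by_cases hv2e : v2 ∈ e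
    · have hsub : rel e ⊆ V0 := hE0 _ hf0
      have hsubE : e.erase v2 ⊆ V0 := by
        intro w hw
        apply hsub
        rw [hrelv2 e hv2e]
        exact Finset.mem_insert_of_mem hw
      have hempty : e.erase v2 = ∅ := by
        rw [Finset.eq_empty_iff_forall_notMem]
        intro w hw
        exact (Finset.mem_erase.mp hw).1 (hEHV0 e he w (Finset.mem_of_mem_erase hw) (hsubE hw))
      have := Finset.card_erase_of_mem hv2e
      rw [hempty, Finset.card_empty, hEHk e he] at this
      omega
    · rw [hrelnv2 e hv2e] at hf0
      have hempty : e = ∅ := by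
        rw [Finset.eq_empty_iff_forall_notMem]
        intro w hw
        exact hv2e ((hEHV0 e he w hw (hE0 e hf0 hw)) ▸ hw)
      have := hEHk e he
      rw [hempty, Finset.card_empty] at this
      omega
  have hinj : ∀ a ∈ EH, ∀ b ∈ EH, rel a = rel b → a = b := by
    intro a ha b hb hab
    by_cases hva : v2 ∈ a <;> by_cases hvb : v2 ∈ b
    · rw [hrelv2 a hva, hrelv2 b hvb] at hab
      have h1 : a.erase v2 = b.erase v2 := by
        have h1a : (insert v1 (a.erase v2)).erase v1 = a.erase v2 :=
          Finset.erase_insert (fun h => hv1nEH a ha (Finset.mem_of_mem_erase h))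
        have h1b : (insert v1 (b.erase v2)).erase v1 = b.erase v2 :=
          Finset.erase_insert (fun h => hv1nEH b hb (Finset.mem_of_mem_erase h))
        rw [← h1a, ← h1b, hab]
      calc a = insert v2 (a.erase v2) := (Finset.insert_erase hva).symm
        _ = insert v2 (b.erase v2) := by rw [h1]
        _ = b := Finset.insert_erase hvb
    · exfalso
      rw [hrelv2 a hva, hrelnv2 b hvb] at hab
      exact hv1nEH b hb (hab ▸ Finset.mem_insert_self v1 (a.erase v2))
    · exfalso
      rw [hrelnv2 a hva, hrelv2 b hvb] at hab
      exact hv1nEH a ha (hab.symm ▸ Finset.mem_insert_self v1 (b.erase v2))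
    · rw [hrelnv2 a hva, hrelnv2 b hvb] at hab; exact hab
  -- eigenvector data
  obtain ⟨hxne, hxeig⟩ := hx
  set lam := lamMin (E0 ∪ EH) k with hlam
  have hgx : 0 < Gf k x := Gf_pos hk hxne
  have hQGx : (k : ℝ) * Qf (E0 ∪ EH) x = lam * Gf k x := eig_qform hU hk0 hxeig
  set S := Af EH v2 x with hSdef
  set B := ∑ e ∈ EH.filter (fun e => ¬ v2 ∈ e), ∏ w ∈ e, x w with hBdef
  have hQEH : Qf EH x = x v2 * S + B := by
    rw [Qf, ← Finset.sum_filter_add_sum_filter_not EH (fun e => v2 ∈ e), ← hBdef]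
    congr 1
    rw [hSdef, Af, Finset.mul_sum]
    refine Finset.sum_congr rfl fun e he => ?_
    exact (Finset.mul_prod_erase e x (Finset.mem_filter.mp he).2).symm
  -- the sign
  set σ : ℝ := if x v1 * S ≤ 0 then 1 else -1 with hσdef
  have hσcases : σ = 1 ∨ σ = -1 := by
    rw [hσdef]; split <;> simp
  have hσk : σ ^ k = 1 := by
    rcases hσcases with h | h <;> rw [h]
    · exact one_pow k
    · exact hk.neg_one_pow
  have hσk1 : σ ^ (k - 1) = σ := by
    rcases hσcases with h | h <;> rw [h]
    · exact one_pow _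
    · exact hkm1.neg_one_pow
  have hσneg : σ * (x v1 * S) = -|x v1 * S| := by
    rcases le_or_gt (x v1 * S) 0 with h | h
    · rw [hσdef, if_pos h, abs_of_nonpos h]; ring
    · rw [hσdef, if_neg (not_le.mpr h), abs_of_pos h]; ring
  -- the relocated vector
  set y : V → ℝ := fun w => if w ∈ V0 then x w else σ * x w with hy
  have hyV0 : ∀ w ∈ V0, y w = x w := by intro w hw; rw [hy]; simp [hw]
  have hGy : Gf k y = Gf k x := by
    unfold Gf
    refine Finset.sum_congr rfl fun v _ => ?_
    by_cases hvV0 : v ∈ V0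
    · rw [hy]; simp [hvV0]
    · rw [hy]; simp only [hvV0, if_false]
      rw [mul_pow, hσk, one_mul]
  have hQE0 : ∀ u : V → ℝ, (∀ w ∈ V0, u w = x w) → Qf E0 u = Qf E0 x := by
    intro u hu
    exact Finset.sum_congr rfl fun e he => Finset.prod_congr rfl fun w hw => hu w (hE0 e he hw)
  have hproderase : ∀ e ∈ EH, v2 ∈ e → ∏ w ∈ e.erase v2, y w = σ * ∏ w ∈ e.erase v2, x w := by
    intro e he hv2e
    have h1 : ∀ w ∈ e.erase v2, y w = σ * x w := by
      intro w hw
      have hwV0 : w ∉ V0 := fun h =>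
        (Finset.mem_erase.mp hw).1 (hEHV0 e he w (Finset.mem_of_mem_erase hw) h)
      rw [hy]; simp [hwV0]
    rw [Finset.prod_congr rfl h1, Finset.prod_mul_distrib, Finset.prod_const,
      Finset.card_erase_of_mem hv2e, hEHk e he, hσk1]
  have hQEH'y : Qf (EH.image rel) y = σ * (x v1 * S) + B := by
    rw [Qf, Finset.sum_image hinj,
      ← Finset.sum_filter_add_sum_filter_not EH (fun e => v2 ∈ e) (f := fun e => ∏ w ∈ rel e, y w)]
    congr 1
    · have hval : ∀ e ∈ EH.filter (fun e => v2 ∈ e),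
          ∏ w ∈ rel e, y w = σ * (x v1 * ∏ w ∈ e.erase v2, x w) := by
        intro e he'
        obtain ⟨he, hv2e⟩ := Finset.mem_filter.mp he'
        rw [hrelv2 e hv2e,
          Finset.prod_insert (fun h => hv1nEH e he (Finset.mem_of_mem_erase h)),
          hyV0 v1 hv1, hproderase e he hv2e]
        ring
      rw [Finset.sum_congr rfl hval, ← Finset.mul_sum, ← Finset.mul_sum, hSdef, Af]
    · refine Finset.sum_congr rfl fun e he' => ?_
      obtain ⟨he, hv2e⟩ := Finset.mem_filter.mp he'
      rw [hrelnv2 e hv2e]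
      have h1 : ∀ w ∈ e, y w = σ * x w := by
        intro w hw
        have hwV0 : w ∉ V0 := fun h => hv2e ((hEHV0 e he w hw h) ▸ hw)
        rw [hy]; simp [hwV0]
      rw [Finset.prod_congr rfl h1, Finset.prod_mul_distrib, Finset.prod_const, hEHk e he,
        hσk, one_mul]
  have hQ'y : Qf E' y = Qf E0 x + (σ * (x v1 * S) + B) := by
    rw [hE', Qf, Finset.sum_union hd', ← Qf, ← Qf, hQEH'y, hQE0 y hyV0]
  have hQxsplit : Qf (E0 ∪ EH) x = Qf E0 x + (x v2 * S + B) := by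
    rw [Qf, Finset.sum_union hd, ← Qf, ← Qf, hQEH]
  have hdiff : Qf E' y ≤ Qf (E0 ∪ EH) x := by
    rw [hQ'y, hQxsplit]
    have h1 : |x v2 * S| ≤ |x v1 * S| := by
      rw [abs_mul, abs_mul]
      exact mul_le_mul_of_nonneg_right hge (abs_nonneg S)
    have h2 : -|x v2 * S| ≤ x v2 * S := neg_abs_le _
    linarith [hσneg]
  -- part 1
  have hmin' := lamMin_eq hU' hk0 hk
  have hminG := lamMin_eq hU hk0 hk
  have hchain : lamMin E' k * Gf k x ≤ lam * Gf k x := by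
    calc lamMin E' k * Gf k x = lamMin E' k * Gf k y := by rw [hGy]
      _ ≤ (k : ℝ) * Qf E' y := hmin' y
      _ ≤ (k : ℝ) * Qf (E0 ∪ EH) x := mul_le_mul_of_nonneg_left hdiff (Nat.cast_nonneg k)
      _ = lam * Gf k x := hQGx
  have hle : lamMin E' k ≤ lam := le_of_mul_le_mul_right hchain hgx
  refine ⟨hle, ?_⟩
  -- part 2
  intro hxv2
  by_contra hnlt
  have heq : lamMin E' k = lam := le_antisymm hle (not_lt.mp hnlt)
  have hQ'ey : (k : ℝ) * Qf E' y = lam * Gf k y := by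
    have h1 : lam * Gf k y ≤ (k : ℝ) * Qf E' y := heq ▸ hmin' y
    have h2 : (k : ℝ) * Qf E' y ≤ lam * Gf k y := by
      rw [hGy]
      calc (k : ℝ) * Qf E' y ≤ (k : ℝ) * Qf (E0 ∪ EH) x :=
            mul_le_mul_of_nonneg_left hdiff (Nat.cast_nonneg k)
        _ = lam * Gf k x := hQGx
    linarith
  have hAfy : Af E' v2 y = lam * (y v2) ^ (k - 1) :=
    key_deriv E' k hk0 lam y v2 hQ'ey (fun u => heq ▸ hmin' u)
  have hfil : E'.filter (fun e => v2 ∈ e) = E0.filter (fun e => v2 ∈ e) := by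
    rw [hE', Finset.filter_union]
    have hemp : (EH.image rel).filter (fun e => v2 ∈ e) = ∅ := by
      rw [Finset.filter_eq_empty_iff]
      intro f hf
      obtain ⟨e, he, rfl⟩ := Finset.mem_image.mp hf
      exact hv2rel e he
    rw [hemp, Finset.union_empty]
  have hAfE0y : Af E' v2 y = Af E0 v2 x := by
    rw [Af, Af, hfil]
    refine Finset.sum_congr rfl fun e he => Finset.prod_congr rfl fun w hw => ?_
    exact hyV0 w (hE0 e (Finset.mem_of_mem_filter e he) (Finset.mem_of_mem_erase hw))
  have hAfxsplit : Af (E0 ∪ EH) v2 x = Af E0 v2 x + S := by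
    rw [Af, Finset.filter_union,
      Finset.sum_union (Finset.disjoint_filter_filter hd), ← Af, ← Af, ← hSdef]
  have hxv2eq : Af (E0 ∪ EH) v2 x = lam * x v2 ^ (k - 1) := hxeig v2
  have hyv2 : y v2 = x v2 := hyV0 v2 hv2
  have hS0 : S = 0 := by
    rw [hAfE0y, hyv2] at hAfy
    rw [hAfxsplit, hAfy] at hxv2eq
    linarith
  -- branch identity
  set Gz := ∑ w ∈ Finset.univ.filter (fun w => w ∈ V0), x w ^ k with hGzdef
  set Gbr := ∑ w ∈ Finset.univ.filter (fun w => ¬ w ∈ V0), x w ^ k with hGbrdef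
  have hGsplit : Gf k x = Gz + Gbr := by
    rw [Gf, ← Finset.sum_filter_add_sum_filter_not Finset.univ (fun w => w ∈ V0)]
  have hbranch : ((k - 1 : ℕ) : ℝ) * (x v2 * S) + (k : ℝ) * B = lam * Gbr := by
    have step1 : ∑ w ∈ Finset.univ.filter (fun w => ¬ w ∈ V0), x w * Af (E0 ∪ EH) w x
        = lam * Gbr := by
      rw [hGbrdef, Finset.mul_sum]
      refine Finset.sum_congr rfl fun w _ => ?_
      rw [show Af (E0 ∪ EH) w x = lam * x w ^ (k - 1) from hxeig w, ← mul_assoc,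
        mul_comm (x w) lam, mul_assoc, ← pow_succ']
      congr 2
      omega
    have step2 : ∑ w ∈ Finset.univ.filter (fun w => ¬ w ∈ V0), x w * Af (E0 ∪ EH) w x
        = ∑ e ∈ E0 ∪ EH, ((e.filter (fun w => ¬ w ∈ V0)).card : ℝ) * ∏ w ∈ e, x w := by
      have hw1 : ∀ w, x w * Af (E0 ∪ EH) w x
          = ∑ e ∈ E0 ∪ EH, (if w ∈ e then x w * ∏ w' ∈ e.erase w, x w' else 0) := by
        intro w
        rw [Af, Finset.mul_sum, Finset.sum_filter]
      rw [Finset.sum_congr rfl fun w _ => hw1 w, Finset.sum_comm]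
      refine Finset.sum_congr rfl fun e he => ?_
      rw [Finset.sum_ite_mem]
      have hint : Finset.univ.filter (fun w => ¬ w ∈ V0) ∩ e = e.filter (fun w => ¬ w ∈ V0) := by
        ext w
        simp only [Finset.mem_inter, Finset.mem_filter, Finset.mem_univ, true_and]
        tauto
      rw [hint]
      have hterm : ∀ w ∈ e.filter (fun w => ¬ w ∈ V0),
          x w * ∏ w' ∈ e.erase w, x w' = ∏ w' ∈ e, x w' := fun w hw =>
        Finset.mul_prod_erase e x (Finset.mem_of_mem_filter w hw)
      rw [Finset.sum_congr rfl hterm, Finset.sum_const, nsmul_eq_mul]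
    have step3 : ∑ e ∈ E0 ∪ EH, ((e.filter (fun w => ¬ w ∈ V0)).card : ℝ) * ∏ w ∈ e, x w
        = ((k - 1 : ℕ) : ℝ) * (x v2 * S) + (k : ℝ) * B := by
      rw [Finset.sum_union hd]
      have hE0part : ∑ e ∈ E0, ((e.filter (fun w => ¬ w ∈ V0)).card : ℝ) * ∏ w ∈ e, x w = 0 := by
        refine Finset.sum_eq_zero fun e he => ?_
        have : e.filter (fun w => ¬ w ∈ V0) = ∅ := by
          rw [Finset.filter_eq_empty_iff]
          intro w hw
          simpa using hE0 e he hw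
        rw [this]
        simp
      rw [hE0part, zero_add,
        ← Finset.sum_filter_add_sum_filter_not EH (fun e => v2 ∈ e)
          (f := fun e => ((e.filter (fun w => ¬ w ∈ V0)).card : ℝ) * ∏ w ∈ e, x w)]
      congr 1
      · have hval : ∀ e ∈ EH.filter (fun e => v2 ∈ e),
            ((e.filter (fun w => ¬ w ∈ V0)).card : ℝ) * ∏ w ∈ e, x w
            = ((k - 1 : ℕ) : ℝ) * (x v2 * ∏ w ∈ e.erase v2, x w) := by
          intro e he'
          obtain ⟨he, hv2e⟩ := Finset.mem_filter.mp he'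
          have hfeq : e.filter (fun w => ¬ w ∈ V0) = e.erase v2 := by
            ext w
            simp only [Finset.mem_filter, Finset.mem_erase]
            constructor
            · rintro ⟨hw, hwV0⟩
              exact ⟨fun h => hwV0 (h ▸ hv2), hw⟩
            · rintro ⟨hwne, hw⟩
              exact ⟨hw, fun h => hwne (hEHV0 e he w hw h)⟩
          rw [hfeq, Finset.card_erase_of_mem hv2e, hEHk e he,
            ← Finset.mul_prod_erase e x hv2e]
        rw [Finset.sum_congr rfl hval, ← Finset.mul_sum, hSdef, Af, ← Finset.mul_sum]
      · have hval : ∀ e ∈ EH.filter (fun e => ¬ v2 ∈ e),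
            ((e.filter (fun w => ¬ w ∈ V0)).card : ℝ) * ∏ w ∈ e, x w
            = (k : ℝ) * ∏ w ∈ e, x w := by
          intro e he'
          obtain ⟨he, hv2e⟩ := Finset.mem_filter.mp he'
          have hfeq : e.filter (fun w => ¬ w ∈ V0) = e := by
            rw [Finset.filter_eq_self]
            intro w hw h
            exact hv2e ((hEHV0 e he w hw h) ▸ hw)
          rw [hfeq, hEHk e he]
        rw [Finset.sum_congr rfl hval, ← Finset.mul_sum, hBdef]
    rw [← step3, ← step2, step1]
  have hkB : (k : ℝ) * B = lam * Gbr := by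
    rw [← hbranch, hS0]
    ring
  have hQz : (k : ℝ) * Qf E0 x = lam * Gz := by
    rw [hQxsplit, hGsplit, hS0] at hQGx
    have : (k : ℝ) * Qf E0 x + (k : ℝ) * B = lam * Gz + lam * Gbr := by linarith
    linarith [hkB]
  -- the perturbation
  obtain ⟨e0, he0, hv2e0⟩ := hroot
  set s0 := e0.erase v2 with hs0def
  have hs0V0 : ∀ w ∈ s0, w ∉ V0 := fun w hw h =>
    (Finset.mem_erase.mp hw).1 (hEHV0 e0 he0 w (Finset.mem_of_mem_erase hw) h)
  have hs0card : s0.card = k - 1 := by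
    rw [hs0def, Finset.card_erase_of_mem hv2e0, hEHk e0 he0]
  set δ : ℝ := (k : ℝ) / (2 * (((k - 1 : ℕ) : ℝ) * |lam| + 1)) with hδdef
  have hδpos : 0 < δ := by
    rw [hδdef]
    apply div_pos (by exact_mod_cast hk0)
    positivity
  set t : ℝ := -(x v2) * δ with htdef
  set u : V → ℝ := fun w => if w ∈ V0 then x w else if w ∈ s0 then t else 0 with hu
  have huV0 : ∀ w ∈ V0, u w = x w := by intro w hw; rw [hu]; simp [hw]
  have hQEHu : Qf EH u = x v2 * t ^ (k - 1) := by
    rw [Qf, ← Finset.sum_filter_add_sum_filter_not EH (fun e => v2 ∈ e)]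
    have hpart2 : ∑ e ∈ EH.filter (fun e => ¬ v2 ∈ e), ∏ w ∈ e, u w = 0 := by
      refine Finset.sum_eq_zero fun e he' => ?_
      obtain ⟨he, hv2e⟩ := Finset.mem_filter.mp he'
      have hnotsub : ¬ e ⊆ s0 := by
        intro hsub
        have := Finset.card_le_card hsub
        rw [hEHk e he, hs0card] at this
        omega
      obtain ⟨w, hw1, hw2⟩ := Finset.not_subset.mp hnotsub
      have hwV0 : w ∉ V0 := fun h => hv2e ((hEHV0 e he w hw1 h) ▸ hw1)
      refine Finset.prod_eq_zero hw1 ?_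
      rw [hu]; simp [hwV0, hw2]
    have hpart1 : ∑ e ∈ EH.filter (fun e => v2 ∈ e), ∏ w ∈ e, u w = x v2 * t ^ (k - 1) := by
      have hval : ∀ e ∈ EH.filter (fun e => v2 ∈ e),
          ∏ w ∈ e, u w = if e = e0 then x v2 * t ^ (k - 1) else 0 := by
        intro e he'
        obtain ⟨he, hv2e⟩ := Finset.mem_filter.mp he'
        by_cases heq : e = e0
        · rw [if_pos heq, heq, ← Finset.mul_prod_erase e0 u hv2e0, ← hs0def]
          have hu2 : u v2 = x v2 := huV0 v2 hv2
          have hprod : ∏ w ∈ s0, u w = t ^ (k - 1) := by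
            have : ∀ w ∈ s0, u w = t := by
              intro w hw
              rw [hu]; simp [hs0V0 w hw, hw]
            rw [Finset.prod_congr rfl this, Finset.prod_const, hs0card]
          rw [hu2, hprod]
        · rw [if_neg heq]
          have hnotsub : ¬ e.erase v2 ⊆ s0 := by
            intro hsub
            apply heq
            have hcards : s0.card ≤ (e.erase v2).card := by
              rw [hs0card, Finset.card_erase_of_mem hv2e, hEHk e he]
            have heqe : e.erase v2 = s0 := Finset.eq_of_subset_of_card_le hsub hcards
            calc e = insert v2 (e.erase v2) := (Finset.insert_erase hv2e).symm
              _ = insert v2 s0 := by rw [heqe]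
              _ = e0 := Finset.insert_erase hv2e0
          obtain ⟨w, hw1, hw2⟩ := Finset.not_subset.mp hnotsub
          have hwne : w ≠ v2 := (Finset.mem_erase.mp hw1).1
          have hwV0 : w ∉ V0 := fun h =>
            hwne (hEHV0 e he w (Finset.mem_of_mem_erase hw1) h)
          refine Finset.prod_eq_zero (Finset.mem_of_mem_erase hw1) ?_
          rw [hu]; simp [hwV0, hw2]
      rw [Finset.sum_congr rfl hval, Finset.sum_ite_eq' (EH.filter (fun e => v2 ∈ e)) e0]
      rw [if_pos (Finset.mem_filter.mpr ⟨he0, hv2e0⟩)]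
    rw [hpart1, hpart2, add_zero]
  have hQu : Qf (E0 ∪ EH) u = Qf E0 x + x v2 * t ^ (k - 1) := by
    rw [Qf, Finset.sum_union hd, ← Qf, ← Qf, hQEHu, hQE0 u huV0]
  have hGu : Gf k u = Gz + ((k - 1 : ℕ) : ℝ) * t ^ k := by
    rw [Gf, ← Finset.sum_filter_add_sum_filter_not Finset.univ (fun w => w ∈ V0)]
    congr 1
    · rw [hGzdef]
      refine Finset.sum_congr rfl fun w hw => ?_
      rw [huV0 w (Finset.mem_filter.mp hw).2]
    · have hval : ∀ w ∈ Finset.univ.filter (fun w => ¬ w ∈ V0),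
          u w ^ k = if w ∈ s0 then t ^ k else 0 := by
        intro w hw
        have hwV0 : ¬ w ∈ V0 := (Finset.mem_filter.mp hw).2
        rw [hu]
        simp only [hwV0, if_false]
        split
        · rfl
        · exact zero_pow hk0.ne'
      rw [Finset.sum_congr rfl hval, Finset.sum_ite_mem]
      have hint : Finset.univ.filter (fun w => ¬ w ∈ V0) ∩ s0 = s0 := by
        rw [Finset.inter_eq_right]
        intro w hw
        exact Finset.mem_filter.mpr ⟨Finset.mem_univ w, hs0V0 w hw⟩
      rw [hint, Finset.sum_const, hs0card, nsmul_eq_mul]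
  -- final contradiction
  have hfin := hminG u
  rw [hGu, hQu] at hfin
  have hxs : x v2 ^ k = x v2 * x v2 ^ (k - 1) := by
    rw [← pow_succ']; congr 1; omega
  have hδs : δ ^ k = δ * δ ^ (k - 1) := by
    rw [← pow_succ']; congr 1; omega
  have ht1 : t ^ (k - 1) = -((x v2 * δ) ^ (k - 1)) := by
    rw [htdef, neg_mul, hkm1.neg_pow]
  have ht2 : t ^ k = (x v2 * δ) ^ k := by
    rw [htdef, neg_mul, hk.neg_pow]
  have hxk : 0 < x v2 ^ k := hk.pow_pos hxv2
  have hδk1 : 0 < δ ^ (k - 1) := pow_pos hδpos _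
  have hbound : ((k - 1 : ℕ) : ℝ) * |lam| * δ ≤ (k : ℝ) / 2 := by
    set c : ℝ := ((k - 1 : ℕ) : ℝ) * |lam| with hcdef
    have hc0 : 0 ≤ c := by positivity
    have hδeq : δ * (2 * (c + 1)) = k := by
      rw [hδdef, hcdef]
      rw [div_mul_cancel₀]
      positivity
    have hexp : 2 * (δ * c) + 2 * δ = (k : ℝ) := by rw [← hδeq]; ring
    linarith [hδpos.le, hexp]
  have hpos2 : 0 < (k : ℝ) + lam * (((k - 1 : ℕ) : ℝ) * δ) := by
    have habs : |lam * (((k - 1 : ℕ) : ℝ) * δ)| = |lam| * (((k - 1 : ℕ) : ℝ) * δ) := by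
      rw [abs_mul, abs_of_nonneg (mul_nonneg (Nat.cast_nonneg _) hδpos.le)]
    have h1 : -(|lam| * (((k - 1 : ℕ) : ℝ) * δ)) ≤ lam * (((k - 1 : ℕ) : ℝ) * δ) := by
      rw [← habs]; exact neg_abs_le _
    have hk2' : (2 : ℝ) ≤ (k : ℝ) := by exact_mod_cast hk2
    linarith [hbound, h1, hk2']
  have hcontra : (k : ℝ) * (x v2 * t ^ (k - 1)) - lam * (((k - 1 : ℕ) : ℝ) * t ^ k)
      = -(x v2 ^ k * δ ^ (k - 1) * ((k : ℝ) + lam * (((k - 1 : ℕ) : ℝ) * δ))) := by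
    rw [ht1, ht2, mul_pow, mul_pow, hxs, hδs]
    ring
  have hposfin : 0 < x v2 ^ k * δ ^ (k - 1) * ((k : ℝ) + lam * (((k - 1 : ℕ) : ℝ) * δ)) :=
    mul_pos (mul_pos hxk hδk1) hpos2
  linarith [hfin, hQz, hcontra, hposfin]
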